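/- For all integers k, ℓ ≥ 2, all natural numbers n ≥ 0, and all b with k ≤ b < k^2, the identity g_{k,ℓ}(k^2·n + b) = −ℓ·g_{k,ℓ}(n) + g_{k,ℓ}(k·n) + ℓ·g_{k,ℓ}(k·n + 1) holds (as an identity of integers). -/

import Mathlib

/-- For integers `k, ℓ ≥ 2`, `g k ℓ 0 = 1` and `g k ℓ n = 1 + ℓ ^ ⌊log_k n⌋` for `n > 0`. -/
def g (k ℓ : ℕ) (n : ℕ) : ℕ := if n = 0 then 1 else 1 + ℓ ^ Nat.log k n

theorem stmt_3 (k ℓ : ℕ) (hk : 2 ≤ k) (hℓ : 2 ≤ ℓ) (n b : ℕ)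
    (hb₁ : k ≤ b) (hb₂ : b < k ^ 2) :
    (g k ℓ (k ^ 2 * n + b) : ℤ) =
      -(ℓ : ℤ) * g k ℓ n + g k ℓ (k * n) + (ℓ : ℤ) * g k ℓ (k * n + 1) := by
  have hk1 : 1 < k := hk
  rcases Nat.eq_zero_or_pos n with rfl | hn
  · have hb0 : b ≠ 0 := by omega
    have h1 : Nat.log k b = 1 := by
      apply Nat.log_eq_of_pow_le_of_lt_pow
      · simpa using hb₁
      · simpa using hb₂
    simp [g, hb0, h1]
    ring
  · have hn0 : n ≠ 0 := hn.ne'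
    have hpl : k ^ Nat.log k n ≤ n := Nat.pow_log_le_self k hn0
    have hlt : n < k ^ (Nat.log k n + 1) := Nat.lt_pow_succ_log_self hk1 n
    set L := Nat.log k n with hL
    have hkpos : 0 < k := by omega
    have h1 : Nat.log k (k ^ 2 * n + b) = L + 2 := by
      apply Nat.log_eq_of_pow_le_of_lt_pow
      · have e : k ^ (L + 2) = k ^ 2 * k ^ L := by ring
        rw [e]
        have : k ^ 2 * k ^ L ≤ k ^ 2 * n := Nat.mul_le_mul_left _ hpl
        omega
      · have e : k ^ (L + 3) = k ^ 2 * k ^ (L + 1) := by ring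
        rw [e]
        have : k ^ 2 * (n + 1) ≤ k ^ 2 * k ^ (L + 1) := Nat.mul_le_mul_left _ hlt
        nlinarith
    have h2 : Nat.log k (k * n) = L + 1 := by
      apply Nat.log_eq_of_pow_le_of_lt_pow
      · rw [pow_succ, mul_comm]
        exact Nat.mul_le_mul_left _ hpl
      · have e : k ^ (L + 2) = k * k ^ (L + 1) := by ring
        rw [e]
        exact (Nat.mul_lt_mul_left hkpos).mpr hlt
    have h3 : Nat.log k (k * n + 1) = L + 1 := by
      apply Nat.log_eq_of_pow_le_of_lt_pow
      · rw [pow_succ, mul_comm]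
        have : k * k ^ L ≤ k * n := Nat.mul_le_mul_left _ hpl
        omega
      · have e : k ^ (L + 2) = k * k ^ (L + 1) := by ring
        rw [e]
        have : k * (n + 1) ≤ k * k ^ (L + 1) := Nat.mul_le_mul_left _ hlt
        nlinarith
    have e1 : k ^ 2 * n + b ≠ 0 := by positivity
    have e2 : k * n ≠ 0 := by positivity
    simp [g, h1, h2, h3, hn0, e1, e2]
    rw [if_neg (by omega), ← hL]
    push_cast
    ring
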